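/- Let τ be a restricted involution of the Grassmannian geometry X with fixed point set Y. For any a ∈ X, τ induces an automorphism of the torsor U_{a,τ(a)} (with product (xyz) = Γ(x,a,y,τ(a),z)), and therefore the fixed-point set G(τ;a) = U_{a,τ(a)} ∩ Y is a subtorsor. Moreover, as a set, G(τ;a) = U_a ∩ Y, where U_a is the set of complements of a. -/

import Mathlib

open Classical in
/-- The projection `P^a_x` with image `x` and kernel `a` (zero if not complementary). -/
noncomputable def projEnd {R W : Type*} [Ring R] [AddCommGroup W] [Module R W]
    (x a : Submodule R W) : Module.End R W :=
  if h : IsCompl x a then x.subtype ∘ₗ x.linearProjOfIsCompl a h else 0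

/-- The restricted multiplication map `Γ(x,a,y,b,z) = M_{xabz}(y)`,
`M_{xabz} = P^a_x - P^z_b`. -/
noncomputable def Gammap {R W : Type*} [Ring R] [AddCommGroup W] [Module R W]
    (x a y b z : Submodule R W) : Submodule R W :=
  Submodule.map (projEnd x a - projEnd b z) y

section aux
variable {R W : Type*} [Ring R] [AddCommGroup W] [Module R W]

lemma projEnd_mem {x a : Submodule R W} (h : IsCompl x a) (w : W) :
    projEnd x a w ∈ x := by
  rw [projEnd, dif_pos h]; exact (x.linearProjOfIsCompl a h w).2

lemma projEnd_sub_mem {x a : Submodule R W} (h : IsCompl x a) (w : W) :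
    w - projEnd x a w ∈ a := by
  rw [projEnd, dif_pos h]
  have : (x.linearProjOfIsCompl a h w : W) + (a.linearProjOfIsCompl x h.symm w : W) = w :=
    Submodule.projection_add_projection_eq_self h w
  have h2 : w - (x.subtype ∘ₗ x.linearProjOfIsCompl a h) w
      = (a.linearProjOfIsCompl x h.symm w : W) := by
    simp only [LinearMap.comp_apply, Submodule.coe_subtype]
    rw [eq_sub_of_add_eq this]; abel
  rw [h2]
  exact (a.linearProjOfIsCompl x h.symm w).2

lemma projEnd_apply_mem_left {x a : Submodule R W} (h : IsCompl x a) {w : W}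
    (hw : w ∈ x) : projEnd x a w = w := by
  rw [projEnd, dif_pos h]
  rw [LinearMap.comp_apply, Submodule.coe_subtype]
  exact congrArg Subtype.val (Submodule.projectionOnto_apply_of_mem_left h hw)

lemma projEnd_apply_mem_right {x a : Submodule R W} (h : IsCompl x a) {w : W}
    (hw : w ∈ a) : projEnd x a w = 0 := by
  rw [projEnd, dif_pos h]
  rw [LinearMap.comp_apply, show x.linearProjOfIsCompl a h w = 0 from
    Submodule.projectionOnto_apply_of_mem_right h hw, map_zero]

/-- Key lemma: the Gamma product of common complements is a complement of `a`. -/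
lemma gammap_isCompl {x a y b z : Submodule R W}
    (hxa : IsCompl x a) (hya : IsCompl y a) (hyb : IsCompl y b)
    (hza : IsCompl z a) (hzb : IsCompl z b) :
    IsCompl (Gammap x a y b z) a := by
  set e := projEnd x a with he
  set f := projEnd b z with hf
  set π := projEnd y a with hπ
  -- π kills a, fixes y mod a, etc.
  have hfz : ∀ w : W, w - f w ∈ z := fun w => projEnd_sub_mem hzb.symm w
  have hfb : ∀ w : W, f w ∈ b := fun w => projEnd_mem hzb.symm w
  have hf0 : ∀ w ∈ z, f w = 0 := fun w hw => projEnd_apply_mem_right hzb.symm hw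
  have hπy : ∀ w : W, π w ∈ y := fun w => projEnd_mem hya w
  have hπa : ∀ w : W, w - π w ∈ a := fun w => projEnd_sub_mem hya w
  have hπ0 : ∀ w ∈ a, π w = 0 := fun w hw => projEnd_apply_mem_right hya hw
  have hea : ∀ w : W, w - e w ∈ a := fun w => projEnd_sub_mem hxa w
  -- M u ≡ u - f u  (mod a)
  have hM : ∀ u : W, (e - f) u - (u - f u) ∈ a := by
    intro u
    have heq : (e - f) u - (u - f u) = -(u - e u) := by
      simp only [LinearMap.sub_apply]; abel
    rw [heq]; exact a.neg_mem (hea u)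
  constructor
  · -- disjoint
    rw [Submodule.disjoint_def]
    rintro w ⟨u, huy, rfl⟩ hwa
    have hs : u - f u ∈ a := by
      have h1 := a.sub_mem hwa (hM u)
      have h2 : (e - f) u - ((e - f) u - (u - f u)) = u - f u := by abel
      rw [h2] at h1; exact h1
    have hsz : u - f u ∈ z := hfz u
    have hs0 : u - f u = 0 :=
      (Submodule.disjoint_def.mp hza.disjoint) _ hsz hs
    have hub : u ∈ b := by
      have : u = f u := by rw [sub_eq_zero] at hs0; exact hs0
      rw [this]; exact hfb u
    have hu0 : u = 0 := (Submodule.disjoint_def.mp hyb.disjoint) _ huy hub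
    simp [hu0]
  · -- codisjoint
    rw [codisjoint_iff, eq_top_iff]
    intro w _
    -- find s ∈ z with π s = π w
    obtain ⟨s, av, hsz, hav, hsav⟩ :=
      Submodule.codisjoint_iff_exists_add_eq.mp hza.codisjoint (π w)
    have hπs : π s = π w := by
      have h1 : π (π w) = π w := projEnd_apply_mem_left hya (hπy w)
      have : π s + π av = π w := by
        rw [← map_add, hsav, h1]
      rw [hπ0 av hav, add_zero] at this; exact this
    -- find u ∈ y with u - f u = s
    obtain ⟨u, bv, huy, hbv, hubv⟩ :=
      Submodule.codisjoint_iff_exists_add_eq.mp hyb.codisjoint s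
    have hufu : u - f u = s := by
      have hfs : f s = 0 := hf0 s hsz
      have : f u + f bv = 0 := by rw [← map_add, hubv, hfs]
      have hfu : f u = -bv := by
        have hfbv : f bv = bv := by
          have h1 : bv - f bv ∈ z := hfz bv
          have h2 : bv - f bv ∈ b := b.sub_mem hbv (hfb bv)
          have := (Submodule.disjoint_def.mp hzb.symm.disjoint) _ h2 h1
          rw [sub_eq_zero] at this; exact this.symm
        rw [hfbv] at this; exact eq_neg_of_add_eq_zero_left this
      rw [hfu, sub_neg_eq_add, hubv]
    -- conclude: w = (e-f)u + (w - (e-f)u), second term in a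
    have hwa : w - (e - f) u ∈ a := by
      have h1 : w - s ∈ a := by
        have hws : w - s = (w - π w) - (s - π s) := by rw [hπs]; abel
        rw [hws]; exact a.sub_mem (hπa w) (hπa s)
      have h2 : s - (e - f) u ∈ a := by
        have : s - (e - f) u = -((e - f) u - (u - f u)) := by rw [← hufu]; abel
        rw [this]; exact a.neg_mem (hM u)
      have h3 : w - (e - f) u = (w - s) + (s - (e - f) u) := by abel
      rw [h3]; exact a.add_mem h1 h2
    exact Submodule.mem_sup.mpr ⟨(e - f) u, ⟨u, huy, rfl⟩, w - (e - f) u, hwa, by abel⟩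
end aux

/-- a restricted involution `τ` of the Grassmannian geometry
induces an automorphism of the torsor `U_{a,τ(a)}`, so its fixed point set
`G(τ;a) = U_{a,τ(a)} ∩ Y` is a subtorsor; moreover, as a set,
`G(τ;a) = U_a ∩ Y`. -/
theorem stmt11 {R W : Type*} [Ring R] [AddCommGroup W] [Module R W]
    (τ : Submodule R W → Submodule R W)
    (hord : ∀ x, τ (τ x) = x)
    (htrans : ∀ x a : Submodule R W, IsCompl x a ↔ IsCompl (τ x) (τ a))
    (hinv : ∀ x a y b z : Submodule R W,
      IsCompl x a → IsCompl x b → IsCompl y a → IsCompl y b →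
      IsCompl z a → IsCompl z b →
      τ (Gammap x a y b z) = Gammap (τ x) (τ b) (τ y) (τ a) (τ z))
    (a : Submodule R W) :
    -- τ is an automorphism of the torsor U_{a,τ(a)}
    (∀ x y z : Submodule R W,
      IsCompl x a → IsCompl x (τ a) → IsCompl y a → IsCompl y (τ a) →
      IsCompl z a → IsCompl z (τ a) →
      τ (Gammap x a y (τ a) z) = Gammap (τ x) a (τ y) (τ a) (τ z)) ∧
    -- hence G(τ;a) = U_{a,τ(a)} ∩ Y is a subtorsor: it is closed under the product
    (∀ x y z : Submodule R W,
      IsCompl x a → IsCompl x (τ a) → IsCompl y a → IsCompl y (τ a) →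
      IsCompl z a → IsCompl z (τ a) →
      τ x = x → τ y = y → τ z = z →
      (IsCompl (Gammap x a y (τ a) z) a ∧ IsCompl (Gammap x a y (τ a) z) (τ a) ∧
        τ (Gammap x a y (τ a) z) = Gammap x a y (τ a) z)) ∧
    -- as a set, G(τ;a) = U_a ∩ Y
    ({x : Submodule R W | IsCompl x a ∧ IsCompl x (τ a) ∧ τ x = x}
      = {x : Submodule R W | IsCompl x a ∧ τ x = x}) := by

  have key := fun {x y z : Submodule R W} (hxa : IsCompl x a) (hxb : IsCompl x (τ a))
      (hya : IsCompl y a) (hyb : IsCompl y (τ a)) (hza : IsCompl z a)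
      (hzb : IsCompl z (τ a)) => gammap_isCompl hxa hya hyb hza hzb
  have part1 : ∀ x y z : Submodule R W,
      IsCompl x a → IsCompl x (τ a) → IsCompl y a → IsCompl y (τ a) →
      IsCompl z a → IsCompl z (τ a) →
      τ (Gammap x a y (τ a) z) = Gammap (τ x) a (τ y) (τ a) (τ z) := by
    intro x y z hxa hxb hya hyb hza hzb
    have := hinv x a y (τ a) z hxa hxb hya hyb hza hzb
    rwa [hord a] at this
  refine ⟨part1, ?_, ?_⟩
  · intro x y z hxa hxb hya hyb hza hzb hfx hfy hfz
    have hfix : τ (Gammap x a y (τ a) z) = Gammap x a y (τ a) z := by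
      rw [part1 x y z hxa hxb hya hyb hza hzb, hfx, hfy, hfz]
    have hca : IsCompl (Gammap x a y (τ a) z) a := key hxa hxb hya hyb hza hzb
    refine ⟨hca, ?_, hfix⟩
    have := (htrans (Gammap x a y (τ a) z) a).mp hca
    rwa [hfix] at this
  · ext x
    simp only [Set.mem_setOf_eq]
    constructor
    · rintro ⟨h1, _, h3⟩; exact ⟨h1, h3⟩
    · rintro ⟨h1, h3⟩
      refine ⟨h1, ?_, h3⟩
      have := (htrans x a).mp h1
      rwa [h3] at this
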